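/- arXiv:2003.09449 — 2 statements merged into one kernel-verified Lean document; each statement's English description precedes it below -/
import Mathlib

section
/- For all natural numbers n ≥ 1 and k ≥ 1 there exists a natural number N (depending only on n and k) such that for every complex vector space X of dimension at least N and every n-homogeneous polynomial P : X → ℂ there exists a k-dimensional linear subspace H ⊆ X with P identically zero on H. -/
universe u

open Module

/-- `P : X → ℂ` is an `n`-homogeneous polynomial on the complex vector space `X`:
there is a symmetric `n`-linear form `A` with `P x = A (x, …, x)`. -/
def IsHomogPoly {X : Type u} [AddCommGroup X] [Module ℂ X] (n : ℕ) (P : X → ℂ) : Prop :=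
  ∃ A : MultilinearMap ℂ (fun _ : Fin n => X) ℂ,
    (∀ (σ : Equiv.Perm (Fin n)) (v : Fin n → X), (A fun i => v (σ i)) = A v) ∧
    ∀ x, P x = A fun _ => x

/-- A subspace of any prescribed dimension `k ≤ finrank` exists. -/
lemma exists_submodule_finrank_eq {X : Type u} [AddCommGroup X] [Module ℂ X]
    {k : ℕ} (hk : k ≤ finrank ℂ X) :
    ∃ H : Submodule ℂ X, finrank ℂ H = k := by
  obtain ⟨f, hf⟩ := exists_linearIndependent_of_le_finrank hk
  exact ⟨Submodule.span ℂ (Set.range f), by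
    rw [finrank_span_eq_card hf, Fintype.card_fin]⟩

/-- FTA step: a positive-degree diagonal of a multilinear form on a space of
dimension ≥ 2 has a nontrivial zero. -/
lemma exists_ne_zero_diag_eq_zero {X : Type u} [AddCommGroup X] [Module ℂ X]
    (h2 : 2 ≤ finrank ℂ X) {d : ℕ} (hd : 1 ≤ d)
    (A : MultilinearMap ℂ (fun _ : Fin d => X) ℂ) :
    ∃ z : X, z ≠ 0 ∧ A (fun _ => z) = 0 := by
  classical
  obtain ⟨f, hf⟩ := exists_linearIndependent_of_le_finrank h2
  set x := f 0
  set y := f 1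
  by_cases hy : A (fun _ => y) = 0
  · exact ⟨y, hf.ne_zero 1, hy⟩
  set p : Polynomial ℂ :=
    ∑ s : Finset (Fin d), Polynomial.C (A (s.piecewise (fun _ => y) (fun _ => x)))
      * Polynomial.X ^ s.card with hp
  have heval : ∀ t : ℂ, p.eval t = A (fun _ => x + t • y) := by
    intro t
    have h0 : (fun _ : Fin d => x + t • y) = (fun _ : Fin d => t • y) + (fun _ => x) := by
      funext j; simp [add_comm]
    rw [h0, A.map_add_univ]
    rw [hp, Polynomial.eval_finset_sum]
    refine Finset.sum_congr rfl fun s _ => ?_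
    have h1 : s.piecewise (fun _ : Fin d => t • y) (fun _ => x) =
        s.piecewise
          (fun j => (fun _ : Fin d => t) j •
            (s.piecewise (fun _ : Fin d => y) (fun _ => x)) j)
          (s.piecewise (fun _ : Fin d => y) (fun _ => x)) := by
      funext j
      by_cases hj : j ∈ s
      · rw [Finset.piecewise_eq_of_mem _ _ _ hj, Finset.piecewise_eq_of_mem _ _ _ hj,
          Finset.piecewise_eq_of_mem _ _ _ hj]
      · rw [Finset.piecewise_eq_of_notMem _ _ _ hj, Finset.piecewise_eq_of_notMem _ _ _ hj,
          Finset.piecewise_eq_of_notMem _ _ _ hj]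
    rw [h1, A.map_piecewise_smul]
    rw [Polynomial.eval_mul, Polynomial.eval_C, Polynomial.eval_pow, Polynomial.eval_X,
      Finset.prod_const, smul_eq_mul, mul_comm]
  have hcoeff : p.coeff d = A (fun _ => y) := by
    rw [hp, Polynomial.finset_sum_coeff]
    rw [Finset.sum_eq_single Finset.univ]
    · simp
    · intro s _ hs
      have hcd : ¬ (d = s.card) := by
        intro h
        exact hs ((Finset.card_eq_iff_eq_univ s).mp (by simp [← h]))
      simp [Polynomial.coeff_C_mul, Polynomial.coeff_X_pow, hcd]
    · simp
  have hdeg : 0 < p.degree := by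
    have h1 : (d : WithBot ℕ) ≤ p.degree :=
      Polynomial.le_degree_of_ne_zero (by rw [hcoeff]; exact hy)
    refine lt_of_lt_of_le ?_ h1
    exact_mod_cast hd
  obtain ⟨t, ht⟩ := Complex.exists_root hdeg
  refine ⟨x + t • y, ?_, by rw [← heval]; exact ht⟩
  intro h0
  have := Fintype.linearIndependent_iff.mp hf ![1, t] ?_ 0
  · simp at this
  · rw [Fin.sum_univ_two]; simpa using h0

/-- The key inductive statement: a bound `N` such that any family of at most `m`
multilinear forms of arities between `1` and `n` on a space of dimension at least `N`
has a common diagonal-zero subspace of dimension `k`. -/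
def Stmt (n m k : ℕ) : Prop :=
  ∃ N : ℕ, ∀ (X : Type u) [AddCommGroup X] [Module ℂ X] [FiniteDimensional ℂ X],
    N ≤ finrank ℂ X →
    ∀ (ι : Type) (_ : Fintype ι) (d : ι → ℕ), Fintype.card ι ≤ m →
    (∀ i, 1 ≤ d i) → (∀ i, d i ≤ n) →
    ∀ A : (i : ι) → MultilinearMap ℂ (fun _ : Fin (d i) => X) ℂ,
    ∃ H : Submodule ℂ X, finrank ℂ H = k ∧ ∀ i, ∀ x ∈ H, A i (fun _ => x) = 0

lemma stmt_one (m k : ℕ) : Stmt.{u} 1 m k := by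
  classical
  refine ⟨k + m, ?_⟩
  intro X _ _ _ hX ι _ d hcard hd1 hdn A
  have hdi : ∀ i, d i = 1 := fun i => le_antisymm (hdn i) (hd1 i)
  have hj0 : ∀ i, (0 : ℕ) < d i := fun i => hd1 i
  haveI hsub : ∀ i, Subsingleton (Fin (d i)) := fun i => by
    rw [hdi i]
    infer_instance
  set L : ι → (X →ₗ[ℂ] ℂ) := fun i =>
    (MultilinearMap.ofSubsingleton ℂ X ℂ (⟨0, hj0 i⟩ : Fin (d i))).symm (A i) with hLdef
  have hLapp : ∀ i x, L i x = A i (fun _ => x) := fun i x => rfl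
  have hKrank : k ≤ finrank ℂ (LinearMap.ker (LinearMap.pi L)) := by
    have h1 := LinearMap.finrank_range_add_finrank_ker (LinearMap.pi L)
    have h2 : finrank ℂ (LinearMap.range (LinearMap.pi L)) ≤ Fintype.card ι := by
      have := Submodule.finrank_le (LinearMap.range (LinearMap.pi L))
      simpa [Module.finrank_pi] using this
    omega
  obtain ⟨H', hH'⟩ := exists_submodule_finrank_eq hKrank
  refine ⟨H'.map (LinearMap.ker (LinearMap.pi L)).subtype,
    by rw [Submodule.finrank_map_subtype_eq]; exact hH', ?_⟩
  intro i x hx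
  have hxK : x ∈ LinearMap.ker (LinearMap.pi L) :=
    Submodule.map_subtype_le (LinearMap.ker (LinearMap.pi L)) H' hx
  have hker := LinearMap.mem_ker.mp hxK
  have hLi : L i x = 0 := by
    have := congrFun hker i
    simpa using this
  rw [← hLapp i x]
  exact hLi

lemma stmt_all : ∀ n m k : ℕ, Stmt.{u} (n + 1) m k := by
  intro n
  induction n with
  | zero => exact fun m k => stmt_one m k
  | succ n IHn =>
    intro m
    induction m with
    | zero =>
      intro k
      refine ⟨k, ?_⟩
      intro X _ _ _ hX ι _ d hcard hd1 hdn A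
      haveI : IsEmpty ι := Fintype.card_eq_zero_iff.mp (Nat.le_zero.mp hcard)
      obtain ⟨H, hH⟩ := exists_submodule_finrank_eq hX
      exact ⟨H, hH, fun i => (IsEmpty.false i).elim⟩
    | succ m IHm =>
      intro k
      induction k with
      | zero =>
        refine ⟨0, ?_⟩
        intro X _ _ _ _ ι _ d _ hd1 _ A
        refine ⟨⊥, by simp, ?_⟩
        intro i x hx
        have hx0 : x = 0 := by simpa using hx
        subst hx0
        haveI : Nonempty (Fin (d i)) := ⟨⟨0, hd1 i⟩⟩
        exact (A i).map_zero
      | succ k IHk =>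
        classical
        obtain ⟨N₁, hN₁⟩ := IHk
        obtain ⟨N₂, hN₂⟩ := IHn ((m + 1) * 2 ^ (n + 2) + 1) N₁
        obtain ⟨N₃, hN₃⟩ := IHm 2
        refine ⟨max (max N₂ N₃) (k + 1), ?_⟩
        intro X _ _ _ hX ι _ d hcard hd1 hdn A
        rcases isEmpty_or_nonempty ι with hι | hι
        · obtain ⟨H, hH⟩ := exists_submodule_finrank_eq
            (le_trans (le_max_right _ _) hX)
          exact ⟨H, hH, fun i => (IsEmpty.false i).elim⟩
        obtain ⟨i₀⟩ := hι
        -- Step A: a 2-dimensional common zero subspace for the forms other than `i₀`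
        have hcardA : Fintype.card {i : ι // i ≠ i₀} ≤ m := by
          have h := Fintype.card_subtype_compl (fun i : ι => i = i₀)
          rw [Fintype.card_subtype_eq] at h
          have : Fintype.card {i : ι // i ≠ i₀} = Fintype.card ι - 1 := h
          omega
        obtain ⟨W₂, hW₂dim, hW₂zero⟩ := hN₃ X
          (le_trans (le_trans (le_max_right N₂ N₃) (le_max_left _ _)) hX)
          {i : ι // i ≠ i₀} inferInstance (fun i => d i.1) hcardA
          (fun i => hd1 i.1) (fun i => hdn i.1) (fun i => A i.1)
        -- Step B: a common nontrivial zero `x₁` of all the forms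
        obtain ⟨z, hz0, hzA⟩ := exists_ne_zero_diag_eq_zero (X := W₂)
          (by rw [hW₂dim]) (hd1 i₀) ((A i₀).compLinearMap (fun _ => W₂.subtype))
        set x₁ : X := (z : X) with hx₁
        have hx₁0 : x₁ ≠ 0 := fun h => hz0 (Subtype.ext h)
        have hx₁A : ∀ i, A i (fun _ => x₁) = 0 := by
          intro i
          by_cases hi : i = i₀
          · subst hi
            simpa using hzA
          · exact hW₂zero ⟨i, hi⟩ x₁ z.2
        -- Step C: a functional not vanishing at `x₁`
        obtain ⟨ℓ, hℓx₁, -⟩ := Submodule.exists_dual_map_eq_bot_of_notMem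
          (p := (⊥ : Submodule ℂ X)) (x := x₁) (by simpa using hx₁0) inferInstance
        -- Step D: the family of partially-evaluated forms, plus `ℓ`
        let κ := {p : Σ i : ι, Finset (Fin (d i)) // p.2 ≠ ∅ ∧ p.2 ≠ Finset.univ} ⊕ Unit
        let d₂ : κ → ℕ := fun j =>
          Sum.rec (fun p => d p.1.1 - p.1.2.card) (fun _ => 1) j
        let A₂ : (j : κ) → MultilinearMap ℂ (fun _ : Fin (d₂ j) => X) ℂ := fun j =>
          Sum.rec (motive := fun j => MultilinearMap ℂ (fun _ : Fin (d₂ j) => X) ℂ)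
            (fun p => (A p.1.1).restr p.1.2ᶜ (by simp [Finset.card_compl]; rfl) x₁)
            (fun _ => MultilinearMap.ofSubsingleton ℂ X ℂ 0 ℓ) j
        have hcardlt : ∀ (i : ι) (s : Finset (Fin (d i))), s ≠ Finset.univ → s.card < d i := by
          intro i s hs
          have h1 : s.card ≤ d i := by simpa using Finset.card_le_univ s
          rcases lt_or_eq_of_le h1 with h | h
          · exact h
          · exact absurd ((Finset.card_eq_iff_eq_univ s).mp (by simpa using h)) hs
        have hd₂1 : ∀ j, 1 ≤ d₂ j := by
          rintro (⟨⟨i, s⟩, hs1, hs2⟩ | j)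
          · have := hcardlt i s hs2
            simp only [d₂]
            omega
          · exact le_refl 1
        have hd₂n : ∀ j, d₂ j ≤ n + 1 := by
          rintro (⟨⟨i, s⟩, hs1, hs2⟩ | j)
          · have h1 : 0 < s.card := Finset.card_pos.mpr (Finset.nonempty_iff_ne_empty.mpr hs1)
            have h2 : d i ≤ n + 2 := hdn i
            simp only [d₂]
            omega
          · simp only [d₂]
            omega
        have hcard₂ : Fintype.card κ ≤ (m + 1) * 2 ^ (n + 2) + 1 := by
          have h1 : Fintype.card {p : Σ i : ι, Finset (Fin (d i)) // p.2 ≠ ∅ ∧ p.2 ≠ Finset.univ}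
              ≤ (m + 1) * 2 ^ (n + 2) := by
            calc Fintype.card {p : Σ i : ι, Finset (Fin (d i)) // p.2 ≠ ∅ ∧ p.2 ≠ Finset.univ}
                ≤ Fintype.card (Σ i : ι, Finset (Fin (d i))) := Fintype.card_subtype_le _
              _ = ∑ i : ι, 2 ^ (d i) := by simp [Fintype.card_sigma, Fintype.card_finset]
              _ ≤ ∑ _i : ι, 2 ^ (n + 2) :=
                  Finset.sum_le_sum (fun i _ => Nat.pow_le_pow_right (by norm_num) (hdn i))
              _ = Fintype.card ι * 2 ^ (n + 2) := by
                  simp [Finset.sum_const, mul_comm]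
              _ ≤ (m + 1) * 2 ^ (n + 2) := Nat.mul_le_mul_right _ hcard
          have h2 : Fintype.card κ =
              Fintype.card {p : Σ i : ι, Finset (Fin (d i)) // p.2 ≠ ∅ ∧ p.2 ≠ Finset.univ} + 1 := by
            simp [κ, Fintype.card_sum]
          omega
        obtain ⟨W, hWdim, hWzero⟩ := hN₂ X
          (le_trans (le_trans (le_max_left N₂ N₃) (le_max_left _ _)) hX)
          κ inferInstance d₂ hcard₂ hd₂1 hd₂n A₂
        -- consequences of the choice of `W`
        have hWℓ : ∀ x ∈ W, ℓ x = 0 := by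
          intro x hx
          have := hWzero (Sum.inr ()) x hx
          simpa [A₂] using this
        have hWB : ∀ (i : ι) (s : Finset (Fin (d i))), s ≠ ∅ → s ≠ Finset.univ →
            ∀ x ∈ W, A i (s.piecewise (fun _ => x₁) (fun _ => x)) = 0 := by
          intro i s hs1 hs2 x hx
          have h0 := hWzero (Sum.inl ⟨⟨i, s⟩, hs1, hs2⟩) x hx
          have hr : A₂ (Sum.inl ⟨⟨i, s⟩, hs1, hs2⟩) (fun _ => x)
              = A i (s.piecewise (fun _ => x₁) (fun _ => x)) := by
            show A i (fun j => if h : j ∈ sᶜ then x else x₁) = _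
            congr 1
            funext j
            by_cases hj : j ∈ s
            · simp [Finset.mem_compl, hj, Finset.piecewise_eq_of_mem _ _ _ hj]
            · simp [Finset.mem_compl, hj, Finset.piecewise_eq_of_notMem _ _ _ hj]
          rw [hr] at h0
          exact h0
        -- Step E: a k-dimensional common zero subspace inside W
        obtain ⟨H₁, hH₁dim, hH₁zero⟩ := hN₁ W (le_of_eq hWdim.symm) ι inferInstance d hcard
          hd1 hdn (fun i => (A i).compLinearMap (fun _ => W.subtype))
        -- Step F: assemble
        have hdisj : Disjoint (ℂ ∙ x₁) (H₁.map W.subtype) := by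
          rw [Submodule.disjoint_def]
          intro a ha hb
          obtain ⟨c, rfl⟩ := Submodule.mem_span_singleton.mp ha
          have haW : c • x₁ ∈ W := Submodule.map_subtype_le W H₁ hb
          have h0 : c * ℓ x₁ = 0 := by
            have := hWℓ _ haW
            simpa using this
          rcases mul_eq_zero.mp h0 with hc | hc
          · simp [hc]
          · exact absurd hc hℓx₁
        have hdim : finrank ℂ ((ℂ ∙ x₁) ⊔ H₁.map W.subtype : Submodule ℂ X) = k + 1 := by
          have h1 := Submodule.finrank_sup_add_finrank_inf_eq (ℂ ∙ x₁) (H₁.map W.subtype)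
          rw [hdisj.eq_bot, finrank_bot, finrank_span_singleton hx₁0,
            Submodule.finrank_map_subtype_eq, hH₁dim] at h1
          omega
        refine ⟨(ℂ ∙ x₁) ⊔ H₁.map W.subtype, hdim, ?_⟩
        intro i x hx
        obtain ⟨a, ha, b, hb, rfl⟩ := Submodule.mem_sup.mp hx
        obtain ⟨c, rfl⟩ := Submodule.mem_span_singleton.mp ha
        obtain ⟨y, hy, rfl⟩ := Submodule.mem_map.mp hb
        have hbW : (y : X) ∈ W := y.2
        have hb0 : A i (fun _ => ((W.subtype : W →ₗ[ℂ] X) y : X)) = 0 := by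
          have := hH₁zero i y hy
          simpa using this
        have hsplit : (fun _ : Fin (d i) => c • x₁ + (W.subtype : W →ₗ[ℂ] X) y)
            = (fun _ : Fin (d i) => c • x₁) + (fun _ => ((W.subtype : W →ₗ[ℂ] X) y : X)) := rfl
        rw [hsplit, (A i).map_add_univ]
        refine Finset.sum_eq_zero fun s _ => ?_
        set b : X := ((W.subtype : W →ₗ[ℂ] X) y : X) with hbdef
        have hsm : s.piecewise (fun _ : Fin (d i) => c • x₁) (fun _ => b)
            = s.piecewise
              (fun j => (fun _ : Fin (d i) => c) j •
                (s.piecewise (fun _ : Fin (d i) => x₁) (fun _ => b)) j)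
              (s.piecewise (fun _ : Fin (d i) => x₁) (fun _ => b)) := by
          funext j
          by_cases hj : j ∈ s
          · rw [Finset.piecewise_eq_of_mem _ _ _ hj, Finset.piecewise_eq_of_mem _ _ _ hj,
              Finset.piecewise_eq_of_mem _ _ _ hj]
          · rw [Finset.piecewise_eq_of_notMem _ _ _ hj, Finset.piecewise_eq_of_notMem _ _ _ hj,
              Finset.piecewise_eq_of_notMem _ _ _ hj]
        rw [hsm, (A i).map_piecewise_smul]
        rcases eq_or_ne s Finset.univ with rfl | hsu
        · rw [Finset.piecewise_univ, hx₁A i, smul_zero]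
        rcases eq_or_ne s ∅ with rfl | hse
        · rw [Finset.piecewise_empty]
          rw [hb0, smul_zero]
        · rw [hWB i s hse hsu b hbW, smul_zero]

/-- For all `n ≥ 1` and `k ≥ 1` there is `N` such that on every complex vector space of
dimension at least `N`, every `n`-homogeneous polynomial vanishes identically on some
`k`-dimensional subspace. -/
theorem exists_dim_bound_zero_subspace (n k : ℕ) (hn : 1 ≤ n) (hk : 1 ≤ k) :
    ∃ N : ℕ, ∀ (X : Type u) [AddCommGroup X] [Module ℂ X],
      (N : Cardinal.{u}) ≤ Module.rank ℂ X →
      ∀ P : X → ℂ, IsHomogPoly n P →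
        ∃ H : Submodule ℂ X, Module.finrank ℂ H = k ∧ ∀ x ∈ H, P x = 0 := by
  obtain ⟨N, hN⟩ := stmt_all.{u} (n - 1) 1 k
  refine ⟨N, ?_⟩
  intro X _ _ hrank P hP
  obtain ⟨A, -, hPA⟩ := hP
  obtain ⟨v, hv⟩ := exists_linearIndependent_of_le_rank hrank
  set X₀ := Submodule.span ℂ (Set.range v) with hX₀def
  haveI : FiniteDimensional ℂ X₀ := FiniteDimensional.span_of_finite ℂ (Set.finite_range v)
  have hX₀ : finrank ℂ X₀ = N := by rw [finrank_span_eq_card hv, Fintype.card_fin]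
  obtain ⟨H₀, hH₀dim, hH₀zero⟩ := hN X₀ (le_of_eq hX₀.symm) Unit inferInstance
    (fun _ => n) (by simp) (fun _ => hn) (fun _ => by show n ≤ n - 1 + 1; omega)
    (fun _ => A.compLinearMap (fun _ => X₀.subtype))
  refine ⟨H₀.map X₀.subtype, by rw [Submodule.finrank_map_subtype_eq]; exact hH₀dim, ?_⟩
  intro x hx
  obtain ⟨y, hy, rfl⟩ := Submodule.mem_map.mp hx
  rw [hPA]
  have := hH₀zero () y hy
  simpa using this
end

section
/- For every natural number p ≥ 1, all degrees n₁, …, n_p ≥ 1, and every k ≥ 1, there exists a natural number N (depending only on n₁, …, n_p and k) such that for every complex vector space X of dimension at least N and all homogeneous polynomials P₁, …, P_p : X → ℂ, where P_j is n_j-homogeneous, there exists a k-dimensional linear subspace H ⊆ X with P_j identically zero on H for every j = 1, …, p. -/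
universe u

open Function

namespace PZ

variable {X : Type u} [AddCommGroup X] [Module ℂ X]

lemma exists_li_fin (k : ℕ) (h : (k : Cardinal.{u}) ≤ Module.rank ℂ X) :
    ∃ x : Fin k → X, LinearIndependent ℂ x := by
  obtain ⟨s, hs, hind⟩ := le_rank_iff_exists_linearIndependent_finset.mp h
  have e : Fin k ≃ ↥(s : Set X) :=
    (Fintype.equivFinOfCardEq (by simpa [Fintype.card_coe] using hs)).symm
  exact ⟨fun i => (e i : X), hind.comp e e.injective⟩

lemma rank_span_fin {k : ℕ} {x : Fin k → X} (hx : LinearIndependent ℂ x) :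
    Module.rank ℂ ↥(Submodule.span ℂ (Set.range x)) = (k : Cardinal.{u}) := by
  haveI : FiniteDimensional ℂ ↥(Submodule.span ℂ (Set.range x)) :=
    FiniteDimensional.span_of_finite ℂ (Set.finite_range x)
  rw [← Module.finrank_eq_rank]
  norm_cast
  simpa using finrank_span_eq_card hx

/-- If a multilinear form vanishes on all tuples from a set, it vanishes on all
tuples from its span. -/
lemma vanish_span {ι : Type} [Fintype ι]
    (A : MultilinearMap ℂ (fun _ : ι => X) ℂ) (s : Set X)
    (h : ∀ g : ι → X, (∀ i, g i ∈ s) → A g = 0) :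
    ∀ g : ι → X, (∀ i, g i ∈ Submodule.span ℂ s) → A g = 0 := by
  classical
  suffices H : ∀ T : Finset ι, ∀ g : ι → X, (∀ i ∈ T, g i ∈ Submodule.span ℂ s) →
      (∀ i ∉ T, g i ∈ s) → A g = 0 by
    intro g hg
    exact H Finset.univ g (fun i _ => hg i) (fun i hi => absurd (Finset.mem_univ i) hi)
  intro T
  induction T using Finset.induction_on with
  | empty => exact fun g _ hg2 => h g fun i => hg2 i (Finset.notMem_empty i)
  | @insert a T ha IH =>
    intro g hg1 hg2
    have key : ∀ z ∈ Submodule.span ℂ s, A (Function.update g a z) = 0 := by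
      intro z hz
      induction hz using Submodule.span_induction with
      | mem y hy =>
        refine IH _ (fun i hi => ?_) (fun i hi => ?_)
        · have hia : i ≠ a := fun he => ha (he ▸ hi)
          rw [Function.update_of_ne hia]
          exact hg1 i (Finset.mem_insert_of_mem hi)
        · by_cases hia : i = a
          · subst hia; simpa using hy
          · rw [Function.update_of_ne hia]
            exact hg2 i (by simp [hia, hi])
      | zero => exact A.map_coord_zero a (Function.update_self a 0 g)
      | add y z _ _ hy hz => rw [A.map_update_add, hy, hz, add_zero]
      | smul c y _ hy => rw [A.map_update_smul, hy, smul_zero]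
    have := key (g a) (hg1 a (Finset.mem_insert_self a T))
    rwa [Function.update_eq_self] at this

/-- Fact A: a multilinear form of arity ≥ 1 over ℂ has a nontrivial diagonal zero
as soon as the rank is at least 2. -/
lemma exists_diag_zero {ι : Type} [Fintype ι] [Nonempty ι]
    (A : MultilinearMap ℂ (fun _ : ι => X) ℂ)
    (hrank : (2 : Cardinal.{u}) ≤ Module.rank ℂ X) :
    ∃ x : X, x ≠ 0 ∧ A (fun _ => x) = 0 := by
  classical
  obtain ⟨w, hw⟩ := exists_li_fin 2 (by exact_mod_cast hrank)
  set u := w 0 with hu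
  set v := w 1 with hv
  set n := Fintype.card ι with hn
  have hn1 : 1 ≤ n := Fintype.card_pos
  set q : Polynomial ℂ :=
    ∑ S : Finset ι, Polynomial.C (A (S.piecewise (fun _ => v) (fun _ => u))) *
      Polynomial.X ^ S.card with hq
  have heval : ∀ t : ℂ, q.eval t = A (fun _ => u + t • v) := by
    intro t
    have expand : A (fun _ => u + t • v) =
        ∑ S : Finset ι, A (S.piecewise (fun _ => t • v) (fun _ => u)) := by
      have := A.map_add_univ (fun _ => t • v) (fun _ => u)
      rw [show (fun _ : ι => u + t • v) = (fun _ => t • v) + (fun _ => u) from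
        funext fun _ => add_comm _ _]
      exact this
    have scale : ∀ S : Finset ι, A (S.piecewise (fun _ => t • v) (fun _ => u)) =
        t ^ S.card * A (S.piecewise (fun _ => v) (fun _ => u)) := by
      intro S
      have h1 : S.piecewise (fun _ : ι => t • v) (fun _ => u) =
          S.piecewise (fun i => t • (S.piecewise (fun _ : ι => v) (fun _ => u)) i)
            (S.piecewise (fun _ : ι => v) (fun _ => u)) := by
        ext i
        by_cases hi : i ∈ S <;>
          simp [Finset.piecewise_eq_of_mem, Finset.piecewise_eq_of_notMem, hi]
      rw [h1, A.map_piecewise_smul]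
      simp [smul_eq_mul]
    rw [expand, hq]
    simp only [Polynomial.eval_finset_sum, Polynomial.eval_mul, Polynomial.eval_C,
      Polynomial.eval_pow, Polynomial.eval_X]
    exact Finset.sum_congr rfl fun S _ => by rw [scale S]; ring
  by_cases hroot : ∃ t : ℂ, A (fun _ => u + t • v) = 0
  · obtain ⟨t, ht⟩ := hroot
    refine ⟨u + t • v, ?_, ht⟩
    intro h0
    have h2 := linearIndependent_fin2.mp hw
    exact h2.2 (-t) (by rw [neg_smul]; rw [neg_eq_iff_add_eq_zero]; rw [add_comm]; exact h0)
  · push_neg at hroot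
    have hnoroot : ∀ t : ℂ, q.eval t ≠ 0 := fun t => by rw [heval t]; exact hroot t
    have hdeg : q.degree ≤ 0 := by
      by_contra hd
      obtain ⟨z, hz⟩ := Complex.exists_root (lt_of_not_ge hd)
      exact hnoroot z hz
    have hcoeff : q.coeff n = 0 :=
      Polynomial.coeff_eq_zero_of_degree_lt (lt_of_le_of_lt hdeg (by exact_mod_cast hn1))
    have hcu : q.coeff n = A (fun _ => v) := by
      rw [hq, Polynomial.finset_sum_coeff]
      rw [Finset.sum_eq_single Finset.univ]
      · simp [Finset.card_univ, ← hn, Finset.piecewise_univ]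
      · intro S _ hS
        have : S.card ≠ n := fun hc => hS (Finset.card_eq_iff_eq_univ S |>.mp (by rw [hc, hn]))
        simp [Polynomial.coeff_C_mul, Polynomial.coeff_X_pow, Ne.symm this]
      · intro h; exact absurd (Finset.mem_univ _) h
    refine ⟨v, hw.ne_zero 1, ?_⟩
    rw [← hcu, hcoeff]

/-- Strong-null property: there is a `k`-dimensional subspace on which every form of the
family (at most `p` forms, arities in `[1,d]`) vanishes on all tuples. -/
def SN (d p k : ℕ) : Prop :=
  ∃ N : ℕ, ∀ (X : Type u) [AddCommGroup X] [Module ℂ X],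
    (N : Cardinal.{u}) ≤ Module.rank ℂ X →
    ∀ (J : Type) [Fintype J], Fintype.card J ≤ p →
    ∀ (ι : J → Type) [∀ j, Fintype (ι j)],
      (∀ j, 1 ≤ Fintype.card (ι j)) → (∀ j, Fintype.card (ι j) ≤ d) →
    ∀ A : (j : J) → MultilinearMap ℂ (fun _ : ι j => X) ℂ,
      ∃ H : Submodule ℂ X, Module.rank ℂ H = k ∧
        ∀ (j : J) (g : ι j → X), (∀ i, g i ∈ H) → A j g = 0

/-- Common-zero property: the family has a common nontrivial diagonal zero. -/
def CZ (d p : ℕ) : Prop :=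
  ∃ N : ℕ, ∀ (X : Type u) [AddCommGroup X] [Module ℂ X],
    (N : Cardinal.{u}) ≤ Module.rank ℂ X →
    ∀ (J : Type) [Fintype J], Fintype.card J ≤ p →
    ∀ (ι : J → Type) [∀ j, Fintype (ι j)],
      (∀ j, 1 ≤ Fintype.card (ι j)) → (∀ j, Fintype.card (ι j) ≤ d) →
    ∀ A : (j : J) → MultilinearMap ℂ (fun _ : ι j => X) ℂ,
      ∃ x : X, x ≠ 0 ∧ ∀ j : J, A j (fun _ => x) = 0

lemma SN_zero (p k : ℕ) : SN.{u} 0 p k := by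
  refine ⟨k, ?_⟩
  intro X _ _ hrank J _ _ ι _ h1 h2 A
  obtain ⟨x, hx⟩ := exists_li_fin k hrank
  refine ⟨Submodule.span ℂ (Set.range x), rank_span_fin hx, ?_⟩
  intro j
  exact absurd (le_trans (h1 j) (h2 j)) (by omega)

lemma CZ_one (d : ℕ) : CZ.{u} d 1 := by
  refine ⟨2, ?_⟩
  intro X _ _ hrank J _ hJ ι _ h1 h2 A
  by_cases hne : Nonempty J
  · obtain ⟨j₀⟩ := hne
    haveI : Nonempty (ι j₀) := Fintype.card_pos_iff.mp (h1 j₀)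
    obtain ⟨x, hx0, hx⟩ := exists_diag_zero (A j₀) (by exact_mod_cast hrank)
    refine ⟨x, hx0, ?_⟩
    haveI : Subsingleton J := Fintype.card_le_one_iff_subsingleton.mp hJ
    intro j
    rwa [Subsingleton.elim j j₀]
  · obtain ⟨x, hx⟩ := exists_li_fin 1 (le_trans (by norm_num) hrank)
    exact ⟨x 0, hx.ne_zero 0, fun j => absurd ⟨j⟩ hne⟩

lemma CZ_of_SN1 (d : ℕ) (hSN1 : ∀ k, SN.{u} d 1 k) : ∀ p, CZ.{u} d p := by
  intro p
  induction p with
  | zero =>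
    refine ⟨1, ?_⟩
    intro X _ _ hrank J _ hJ ι _ h1 h2 A
    obtain ⟨x, hx⟩ := exists_li_fin 1 hrank
    haveI : IsEmpty J := Fintype.card_eq_zero_iff.mp (Nat.le_zero.mp hJ)
    exact ⟨x 0, hx.ne_zero 0, fun j => isEmptyElim j⟩
  | succ p IH =>
    obtain ⟨Np, hNp⟩ := IH
    obtain ⟨Ns, hNs⟩ := hSN1 Np
    refine ⟨Ns + 1, ?_⟩
    intro X _ _ hrank J _ hJ ι _ h1 h2 A
    classical
    by_cases hne : Nonempty J
    · obtain ⟨j₀⟩ := hne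
      obtain ⟨H, hHrank, hHnull⟩ := hNs X
        (le_trans (by exact_mod_cast Nat.le_succ Ns) hrank) PUnit
        (by simp) (fun _ => ι j₀) (fun _ => h1 j₀) (fun _ => h2 j₀)
        (fun _ => A j₀)
      obtain ⟨y, hy0, hy⟩ := hNp ↥H (le_of_eq hHrank.symm)
        {j : J // j ≠ j₀}
        (Nat.lt_succ_iff.mp (lt_of_lt_of_le
          (Fintype.card_subtype_lt (p := fun j => j ≠ j₀) (x := j₀) (by simp)) hJ))
        (fun j => ι j.1) (fun j => h1 j.1) (fun j => h2 j.1)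
        (fun j => (A j.1).compLinearMap (fun _ => H.subtype))
      refine ⟨(y : X), fun h => hy0 (by exact_mod_cast Subtype.val_injective h), ?_⟩
      intro j
      by_cases hj : j = j₀
      · subst hj
        exact hHnull PUnit.unit (fun _ => (y : X)) (fun _ => y.2)
      · exact hy ⟨j, hj⟩
    · obtain ⟨x, hx⟩ := exists_li_fin 1
        (le_trans (by exact_mod_cast Nat.le_add_left 1 Ns) hrank)
      exact ⟨x 0, hx.ne_zero 0, fun j => absurd ⟨j⟩ hne⟩

lemma SN_step (d p : ℕ) (hmix : ∀ p' k', SN.{u} d p' k') (hfull : CZ.{u} (d + 1) p) :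
    ∀ k, SN.{u} (d + 1) p k := by
  suffices VS : ∀ k, ∃ N : ℕ, ∀ (X : Type u) [AddCommGroup X] [Module ℂ X],
      (N : Cardinal.{u}) ≤ Module.rank ℂ X →
      ∀ (J : Type) [Fintype J], Fintype.card J ≤ p →
      ∀ (ι : J → Type) [∀ j, Fintype (ι j)],
        (∀ j, 1 ≤ Fintype.card (ι j)) → (∀ j, Fintype.card (ι j) ≤ d + 1) →
      ∀ A : (j : J) → MultilinearMap ℂ (fun _ : ι j => X) ℂ,
        ∃ x : Fin k → X, LinearIndependent ℂ x ∧
          ∀ (j : J) (g : ι j → Fin k), A j (fun i => x (g i)) = 0 by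
    intro k
    obtain ⟨N, hN⟩ := VS k
    refine ⟨N, ?_⟩
    intro X _ _ hrank J _ hJ ι _ h1 h2 A
    obtain ⟨x, hxli, hxnull⟩ := hN X hrank J hJ ι h1 h2 A
    refine ⟨Submodule.span ℂ (Set.range x), rank_span_fin hxli, ?_⟩
    intro j g hg
    refine vanish_span (A j) (Set.range x) ?_ g hg
    intro g' hg'
    choose f hf using hg'
    have hfg : (fun i => x (f i)) = g' := funext fun i => hf i
    rw [← hfg]
    exact hxnull j f
  intro k
  induction k with
  | zero =>
    refine ⟨0, ?_⟩
    intro X _ _ _ J _ _ ι _ h1 _ A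
    refine ⟨Fin.elim0, linearIndependent_empty_type, ?_⟩
    intro j g
    haveI : Nonempty (ι j) := Fintype.card_pos_iff.mp (h1 j)
    exact (g (Classical.arbitrary (ι j))).elim0
  | succ k IH =>
    obtain ⟨Nv, hNv⟩ := IH
    obtain ⟨Nf, hNf⟩ := hfull
    set pmix := p * (2 ^ (d + 1) * (k + 1) ^ (d + 1)) with hpmix
    obtain ⟨Ns, hNs⟩ := hmix pmix Nf
    refine ⟨Nv + k + Ns, ?_⟩
    intro X _ _ hrank J _ hJ ι _ h1 h2 A
    classical
    -- step 1: the k previously chosen vectors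
    obtain ⟨x, hxli, hxnull⟩ := hNv X
      (le_trans (by exact_mod_cast (by omega : Nv ≤ Nv + k + Ns)) hrank)
      J hJ ι h1 h2 A
    set S := Submodule.span ℂ (Set.range x) with hS
    obtain ⟨W₀, hc⟩ := Submodule.exists_isCompl S
    -- step 2: rank of the complement
    have hrankW₀ : (Ns : Cardinal.{u}) ≤ Module.rank ℂ W₀ := by
      have hsum := Submodule.rank_sup_add_rank_inf_eq S W₀
      rw [hc.sup_eq_top, hc.inf_eq_bot, rank_bot, add_zero, rank_top,
        rank_span_fin hxli] at hsum
      rcases lt_or_ge (Module.rank ℂ ↥W₀) Cardinal.aleph0 with hfin | hinf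
      · obtain ⟨w, hw⟩ := Cardinal.lt_aleph0.mp hfin
        have h1' : ((Nv + k + Ns : ℕ) : Cardinal.{u}) ≤ ((k + w : ℕ) : Cardinal.{u}) := by
          refine le_trans hrank ?_
          rw [hsum, hw]
          exact le_of_eq (by push_cast; ring)
        have h2' : Nv + k + Ns ≤ k + w := Nat.cast_le.mp h1'
        rw [hw]
        exact Nat.cast_le.mpr (by omega)
      · exact le_trans (le_of_lt (Cardinal.nat_lt_aleph0 Ns)) hinf
    -- step 3: mixed forms on the complement
    let Jm : Type := (j : J) × ({T : Finset (ι j) // T.Nonempty ∧ T ≠ Finset.univ} × (ι j → Fin k))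
    let Am : (σ : Jm) → MultilinearMap ℂ (fun _ : {a // a ∈ σ.2.1.1} => ↥W₀) ℂ := fun σ =>
      ((A σ.1).domDomRestrict (fun i => i ∈ σ.2.1.1)
        (fun i0 => x (σ.2.2 i0.1))).compLinearMap (fun _ => W₀.subtype)
    have hcard : Fintype.card Jm ≤ pmix := by
      rw [Fintype.card_sigma]
      calc ∑ j : J, Fintype.card
            ({T : Finset (ι j) // T.Nonempty ∧ T ≠ Finset.univ} × (ι j → Fin k))
          ≤ ∑ _j : J, 2 ^ (d + 1) * (k + 1) ^ (d + 1) := by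
            refine Finset.sum_le_sum fun j _ => ?_
            rw [Fintype.card_prod]
            refine Nat.mul_le_mul ?_ ?_
            · calc Fintype.card {T : Finset (ι j) // T.Nonempty ∧ T ≠ Finset.univ}
                  ≤ Fintype.card (Finset (ι j)) := Fintype.card_subtype_le _
                _ = 2 ^ Fintype.card (ι j) := Fintype.card_finset
                _ ≤ 2 ^ (d + 1) := Nat.pow_le_pow_right (by norm_num) (h2 j)
            · calc Fintype.card (ι j → Fin k) = k ^ Fintype.card (ι j) := by
                    rw [Fintype.card_fun, Fintype.card_fin]
                _ ≤ (k + 1) ^ Fintype.card (ι j) := Nat.pow_le_pow_left (Nat.le_succ k) _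
                _ ≤ (k + 1) ^ (d + 1) := Nat.pow_le_pow_right (by omega) (h2 j)
        _ = Fintype.card J * (2 ^ (d + 1) * (k + 1) ^ (d + 1)) := by
            rw [Finset.sum_const, Finset.card_univ, smul_eq_mul]
        _ ≤ pmix := Nat.mul_le_mul_right _ hJ
    obtain ⟨W, hWrank, hWnull⟩ := hNs ↥W₀ hrankW₀ Jm hcard
      (fun σ => {a // a ∈ σ.2.1.1})
      (fun σ => by
        have : Fintype.card {a // a ∈ σ.2.1.1} = σ.2.1.1.card := Fintype.card_coe _
        rw [this]
        exact Finset.card_pos.mpr σ.2.1.2.1)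
      (fun σ => by
        have : Fintype.card {a // a ∈ σ.2.1.1} = σ.2.1.1.card := Fintype.card_coe _
        rw [this]
        have hlt : σ.2.1.1.card < Fintype.card (ι σ.1) := by
          rw [← Finset.card_univ]
          exact Finset.card_lt_card (Finset.ssubset_univ_iff.mpr σ.2.1.2.2)
        have := h2 σ.1
        omega)
      Am
    -- step 4: common full-degree zero inside W
    let incl : ↥W →ₗ[ℂ] X := W₀.subtype ∘ₗ W.subtype
    have hinclinj : Function.Injective incl := by
      have : ⇑incl = ⇑W₀.subtype ∘ ⇑W.subtype := by
        simp [incl, LinearMap.coe_comp]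
      rw [this]
      exact (Submodule.injective_subtype W₀).comp (Submodule.injective_subtype W)
    obtain ⟨y, hy0, hyzero⟩ := hNf ↥W (le_of_eq hWrank.symm) J hJ ι h1 h2
      (fun j => (A j).compLinearMap (fun _ => incl))
    set z : X := incl y with hz
    have hz0 : z ≠ 0 := fun h => hy0 (hinclinj (by simpa using h))
    have hzW₀ : z ∈ W₀ := (W.subtype y).2
    have hznotinS : z ∉ S := by
      intro hzin
      have hmem : z ∈ S ⊓ W₀ := ⟨hzin, hzW₀⟩
      rw [hc.inf_eq_bot] at hmem
      exact hz0 (by simpa using hmem)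
    -- step 5: the new family
    have hx' : ∃ x' : Fin (k + 1) → X, x' = Fin.snoc x z := ⟨Fin.snoc x z, rfl⟩
    obtain ⟨x', hx'⟩ := hx'
    have hxlast : x' (Fin.last k) = z := by rw [hx']; simp
    have hxcast : ∀ i : Fin k, x' i.castSucc = x i := by
      intro i; rw [hx']; simp
    refine ⟨x', by rw [hx']; exact linearIndependent_fin_snoc.mpr ⟨hxli, hznotinS⟩, ?_⟩
    intro j g
    by_cases hall : ∀ i, g i = Fin.last k
    · have hfun : (fun i => x' (g i)) = fun _ : ι j => z := by
        funext i
        rw [hall i]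
        exact hxlast
      rw [hfun]
      exact hyzero j
    · push_neg at hall
      obtain ⟨i₀, hi₀⟩ := hall
      by_cases hnone : ∀ i, g i ≠ Fin.last k
      · let g' : ι j → Fin k := fun i => (g i).castPred (hnone i)
        have hfun : (fun i => x' (g i)) = fun i => x (g' i) := by
          funext i
          have hgi : g i = (g' i).castSucc := (Fin.castSucc_castPred _ _).symm
          rw [hgi]
          exact hxcast (g' i)
        rw [hfun]
        exact hxnull j g'
      · push_neg at hnone
        obtain ⟨i₁, hi₁⟩ := hnone
        set T : Finset (ι j) := Finset.univ.filter (fun i => g i = Fin.last k) with hT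
        have hTmem : ∀ i, i ∈ T ↔ g i = Fin.last k := fun i => by simp [hT]
        have hTne : T.Nonempty := ⟨i₁, (hTmem i₁).mpr hi₁⟩
        have hTnu : T ≠ Finset.univ := fun h => hi₀ ((hTmem i₀).mp (h ▸ Finset.mem_univ i₀))
        let f : ι j → Fin k := fun i =>
          if h : g i = Fin.last k then (g i₀).castPred hi₀ else (g i).castPred h
        have hmx := hWnull ⟨j, ⟨⟨T, hTne, hTnu⟩, f⟩⟩ (fun _ => W.subtype y)
          (fun _ => y.2)
        simp only [Am, MultilinearMap.compLinearMap_apply,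
          MultilinearMap.domDomRestrict_apply] at hmx
        have hfun : (fun i => x' (g i)) =
            (fun i => if h : i ∈ T then (W₀.subtype (W.subtype y)) else x (f i)) := by
          funext i
          by_cases hi : g i = Fin.last k
          · rw [dif_pos ((hTmem i).mpr hi), hi, hxlast]
            rfl
          · rw [dif_neg (fun hmem => hi ((hTmem i).mp hmem))]
            have hgi : g i = ((g i).castPred hi).castSucc := (Fin.castSucc_castPred _ _).symm
            rw [hgi]
            rw [hxcast ((g i).castPred hi)]
            simp only [f]
            rw [dif_neg hi]
        rw [hfun]
        exact hmx

lemma SN_all : ∀ d p k, SN.{u} d p k := by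
  intro d
  induction d with
  | zero => exact SN_zero
  | succ d IH =>
    have SN1 : ∀ k, SN.{u} (d + 1) 1 k := SN_step d 1 IH (CZ_one (d + 1))
    have CZall : ∀ p, CZ.{u} (d + 1) p := CZ_of_SN1 (d + 1) SN1
    exact fun p k => SN_step d p IH (CZall p) k

end PZ

/-- For all degrees `n₁, …, n_p ≥ 1` and every `k ≥ 1` there is `N` such that on every
complex vector space of dimension at least `N`, any family of homogeneous polynomials
`P₁, …, P_p` (with `P_j` being `n_j`-homogeneous) vanishes simultaneously on some
`k`-dimensional subspace. -/
theorem exists_dim_bound_common_zero_subspace (p : ℕ) (hp : 1 ≤ p) (deg : Fin p → ℕ)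
    (hdeg : ∀ j, 1 ≤ deg j) (k : ℕ) (hk : 1 ≤ k) :
    ∃ N : ℕ, ∀ (X : Type u) [AddCommGroup X] [Module ℂ X],
      (N : Cardinal.{u}) ≤ Module.rank ℂ X →
      ∀ P : Fin p → X → ℂ, (∀ j, IsHomogPoly (deg j) (P j)) →
        ∃ H : Submodule ℂ X, Module.finrank ℂ H = k ∧ ∀ j, ∀ x ∈ H, P j x = 0 := by
  classical
  set d := Finset.univ.sup deg with hd
  obtain ⟨N, hN⟩ := PZ.SN_all.{u} d p k
  refine ⟨N, ?_⟩
  intro X _ _ hrank P hP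
  choose A hsym hA using hP
  obtain ⟨H, hHrank, hnull⟩ := hN X hrank (Fin p) (by simp) (fun j => Fin (deg j))
    (fun j => by simpa using hdeg j)
    (fun j => by simpa using Finset.le_sup (f := deg) (Finset.mem_univ j)) A
  refine ⟨H, Module.finrank_eq_of_rank_eq hHrank, ?_⟩
  intro j x hx
  rw [hA j x]
  exact hnull j (fun _ => x) (fun _ => hx)
end
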